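/- Given ε > 0, μ ∈ M and m ∈ [Eμ−ε, Eμ+ε], there exists a unique measure S(μ; m, ε) ∈ B^SL(μ,ε) ∩ M_m such that S(μ; m, ε) ≤_c ν for all ν ∈ B^SL(μ,ε) ∩ M_m, and its call function is R^min_μ(x; m, ε) = max{ (m − x)⁺, R_μ(x) − ε } for all x ∈ ℝ. -/

import Mathlib

open MeasureTheory Filter Set
open scoped ENNReal

/-- Call function `R_μ(x) = ∫ (y−x)⁺ μ(dy)`. -/
noncomputable def callFn (μ : Measure ℝ) (x : ℝ) : ℝ := ∫ y, max (y - x) 0 ∂μ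

/-- Mean `Eμ = ∫ y μ(dy)`. -/
noncomputable def meanM (μ : Measure ℝ) : ℝ := ∫ y, y ∂μ

/-- Distribution function `F_μ(x) = μ((−∞,x])`. -/
noncomputable def cdfM (μ : Measure ℝ) (x : ℝ) : ℝ := (μ (Set.Iic x)).toReal

/-- Membership in `M`: Borel probability measure on ℝ with finite first moment. -/
def MemM (μ : Measure ℝ) : Prop :=
  IsProbabilityMeasure μ ∧ Integrable (fun y => y) μ

/-- Convex order `μ ≤_c ν`. -/
def ConvexOrder (μ ν : Measure ℝ) : Prop :=
  ∀ φ : ℝ → ℝ, ConvexOn ℝ Set.univ φ → Integrable φ μ → Integrable φ ν →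
    ∫ y, φ y ∂μ ≤ ∫ y, φ y ∂ν

/-- Infinity Wasserstein distance via distribution functions, valued in `[0,∞]`,
with `inf ∅ = ∞`. -/
noncomputable def Winf (μ ν : Measure ℝ) : ℝ≥0∞ :=
  sInf (ENNReal.ofReal '' {ε : ℝ | 0 < ε ∧ ∀ x : ℝ,
    cdfM μ (x - ε) ≤ cdfM ν x ∧ cdfM ν x ≤ cdfM μ (x + ε)})

/-- Membership in the closed ball `B^∞(μ,ε)` (within `M`). -/
def InBallWinf (μ : Measure ℝ) (ε : ℝ) (ν : Measure ℝ) : Prop :=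
  MemM ν ∧ Winf μ ν ≤ ENNReal.ofReal ε

/-- `conv2 f g`: the largest convex function majorized by `min f g`, pointwise. -/
noncomputable def conv2 (f g : ℝ → ℝ) (x : ℝ) : ℝ :=
  sSup {z : ℝ | ∃ h : ℝ → ℝ, ConvexOn ℝ Set.univ h ∧ (∀ y, h y ≤ min (f y) (g y)) ∧ z = h x}

/-- `R^min_μ(x; m, ε)`. -/
noncomputable def RminW (μ : Measure ℝ) (m ε x : ℝ) : ℝ :=
  max (m + callFn μ (x - ε) - (meanM μ + ε)) (callFn μ (x + ε))

/-- `R^max_μ(x; m, ε)`. -/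
noncomputable def RmaxW (μ : Measure ℝ) (m ε x : ℝ) : ℝ :=
  conv2 (fun y => m + callFn μ (y + ε) - (meanM μ - ε)) (fun y => callFn μ (y - ε)) x

/-- Right derivative. -/
noncomputable def rderiv (f : ℝ → ℝ) (x : ℝ) : ℝ := derivWithin f (Set.Ioi x) x

/-- `R` is a call function: convex, nonincreasing, tending to `0` at `+∞`, and
`R(x)+x` has a finite limit at `−∞`. -/
def IsCallFn (R : ℝ → ℝ) : Prop :=
  ConvexOn ℝ Set.univ R ∧ Antitone R ∧
    Tendsto R atTop (nhds 0) ∧ ∃ c : ℝ, Tendsto (fun x => R x + x) atBot (nhds c)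

/-- Stop-loss distance, valued in `[0,∞]`. -/
noncomputable def dSL (μ ν : Measure ℝ) : ℝ≥0∞ :=
  ⨆ x : ℝ, ENNReal.ofReal |callFn μ x - callFn ν x|

/-- Lévy distance. -/
noncomputable def dLevy (μ ν : Measure ℝ) : ℝ≥0∞ :=
  sInf (ENNReal.ofReal '' {h : ℝ | 0 < h ∧ ∀ x : ℝ,
    cdfM μ (x - h) - h ≤ cdfM ν x ∧ cdfM ν x ≤ cdfM μ (x + h) + h})

/-- Prokhorov distance on ℝ. -/
noncomputable def dProk (μ ν : Measure ℝ) : ℝ≥0∞ :=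
  sInf (ENNReal.ofReal '' {h : ℝ | 0 < h ∧ ∀ A : Set ℝ, IsClosed A →
    ν A ≤ μ (Metric.cthickening h A) + ENNReal.ofReal h})

/-- Modified Lévy distance with parameter `p`. -/
noncomputable def dLevyMod (p : ℝ) (μ ν : Measure ℝ) : ℝ≥0∞ :=
  sInf (ENNReal.ofReal '' {h : ℝ | 0 < h ∧ ∀ x : ℝ,
    cdfM μ (x - h) - p ≤ cdfM ν x ∧ cdfM ν x ≤ cdfM μ (x + h) + p})

/-- Modified Prokhorov distance with parameter `p`. -/
noncomputable def dProkMod (p : ℝ) (μ ν : Measure ℝ) : ℝ≥0∞ :=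
  sInf (ENNReal.ofReal '' {h : ℝ | 0 < h ∧ ∀ A : Set ℝ, IsClosed A →
    ν A ≤ μ (Metric.cthickening h A) + ENNReal.ofReal p})

section BallSLAux

namespace BallSL

open MeasureTheory Topology

variable {μ ν : Measure ℝ}

/-- put function -/
noncomputable def putFn (μ : Measure ℝ) (x : ℝ) : ℝ := ∫ y, max (x - y) 0 ∂μ

lemma integrable_call (hμ : MemM μ) (x : ℝ) :
    Integrable (fun y => max (y - x) 0) μ := by
  haveI := hμ.1
  simpa [Pi.sup_def, max_comm] using (hμ.2.sub (integrable_const x)).sup (integrable_const 0)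

lemma integrable_put (hμ : MemM μ) (x : ℝ) :
    Integrable (fun y => max (x - y) 0) μ := by
  haveI := hμ.1
  simpa [Pi.sup_def, max_comm] using ((integrable_const x).sub hμ.2).sup (integrable_const 0)

lemma callFn_nonneg (μ : Measure ℝ) (x : ℝ) : 0 ≤ callFn μ x :=
  integral_nonneg fun y => le_max_right _ _

lemma putFn_nonneg (μ : Measure ℝ) (x : ℝ) : 0 ≤ putFn μ x :=
  integral_nonneg fun y => le_max_right _ _

lemma call_sub_put (hμ : MemM μ) (x : ℝ) : callFn μ x - putFn μ x = meanM μ - x := by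
  haveI := hμ.1
  have key : ∀ y : ℝ, max (y - x) 0 - max (x - y) 0 = y - x := by
    intro y
    rcases le_total y x with h | h
    · rw [max_eq_right (by linarith), max_eq_left (by linarith)]; ring
    · rw [max_eq_left (by linarith), max_eq_right (by linarith)]; ring
  calc callFn μ x - putFn μ x
      = ∫ y, (max (y - x) 0 - max (x - y) 0) ∂μ :=
        (integral_sub (integrable_call hμ x) (integrable_put hμ x)).symm
    _ = ∫ y, (y - x) ∂μ := by simp only [key]
    _ = meanM μ - x := by
        rw [integral_sub hμ.2 (integrable_const x), integral_const]
        simp [meanM, measure_univ]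

lemma jensen_call (hμ : MemM μ) (x : ℝ) : max (meanM μ - x) 0 ≤ callFn μ x := by
  refine max_le ?_ (callFn_nonneg μ x)
  have h1 := call_sub_put hμ x
  have h2 := putFn_nonneg μ x
  linarith

lemma callFn_antitone (hμ : MemM μ) : Antitone (callFn μ) := by
  intro x y hxy
  refine integral_mono (integrable_call hμ y) (integrable_call hμ x) fun z => ?_
  exact max_le_max (by linarith) le_rfl

lemma callFn_lipschitz (hμ : MemM μ) (x y : ℝ) : |callFn μ x - callFn μ y| ≤ |x - y| := by
  haveI := hμ.1
  rw [callFn, callFn, ← integral_sub (integrable_call hμ x) (integrable_call hμ y)]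
  calc |∫ z, (max (z - x) 0 - max (z - y) 0) ∂μ|
      ≤ ∫ z, |max (z - x) 0 - max (z - y) 0| ∂μ := by
        simpa [Real.norm_eq_abs] using
          norm_integral_le_integral_norm (fun z => max (z - x) 0 - max (z - y) 0) (μ := μ)
    _ ≤ ∫ _z, |x - y| ∂μ := by
        refine integral_mono (((integrable_call hμ x).sub (integrable_call hμ y)).abs)
          (integrable_const _) fun z => ?_
        calc |max (z - x) 0 - max (z - y) 0| ≤ |(z - x) - (z - y)| :=
              abs_max_sub_max_le_abs _ _ _
          _ = |x - y| := by rw [abs_sub_comm]; ring_nf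
    _ = |x - y| := by rw [integral_const]; simp [measure_univ]

lemma callFn_continuous (hμ : MemM μ) : Continuous (callFn μ) := by
  refine (LipschitzWith.of_dist_le_mul (K := 1) fun x y => ?_).continuous
  simpa [Real.dist_eq] using callFn_lipschitz hμ x y

lemma callFn_add_mono (hμ : MemM μ) : Monotone (fun x => callFn μ x + x) := by
  intro x y hxy
  have h := abs_le.mp (callFn_lipschitz hμ x y)
  have h2 : |x - y| = y - x := by rw [abs_sub_comm]; exact abs_of_nonneg (by linarith)
  rw [h2] at h
  simp only
  linarith [h.2]

lemma antitone_tendsto_atTop {f : ℝ → ℝ} {L : ℝ} (hf : Antitone f)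
    (hseq : Tendsto (fun n : ℕ => f n) atTop (𝓝 L)) (hge : ∀ x, L ≤ f x) :
    Tendsto f atTop (𝓝 L) := by
  rw [Metric.tendsto_atTop] at hseq ⊢
  intro e he
  obtain ⟨N, hN⟩ := hseq e he
  refine ⟨N, fun r hr => ?_⟩
  have h1 : f r ≤ f N := hf hr
  have h2 := hN N le_rfl
  rw [Real.dist_eq, abs_of_nonneg (sub_nonneg.2 (hge _))] at h2 ⊢
  linarith [hge r]

lemma tendsto_callFn_atTop (hμ : MemM μ) : Tendsto (callFn μ) atTop (𝓝 0) := by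
  haveI := hμ.1
  refine antitone_tendsto_atTop (callFn_antitone hμ) ?_ fun x => callFn_nonneg μ x
  have h0 : (0 : ℝ) = ∫ _y, (0 : ℝ) ∂μ := by simp
  rw [h0]
  refine tendsto_integral_of_dominated_convergence (fun y => |y|)
    (fun n => (Continuous.aestronglyMeasurable (by continuity))) (hμ.2.abs) (fun n => ?_) ?_
  · refine Eventually.of_forall fun y => ?_
    rw [Real.norm_eq_abs, abs_of_nonneg (le_max_right _ _)]
    rcases le_total y ((n : ℝ)) with h | h
    · calc max (y - n) 0 = 0 := max_eq_right (by linarith)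
        _ ≤ |y| := abs_nonneg y
    · calc max (y - n) 0 = y - n := max_eq_left (by linarith)
        _ ≤ |y| := by have := Nat.cast_nonneg (α := ℝ) n; have := le_abs_self y; linarith
  · refine Eventually.of_forall fun y => ?_
    refine tendsto_const_nhds.congr' ?_
    filter_upwards [eventually_ge_atTop ⌈y⌉₊] with n hn
    have : y ≤ (n : ℝ) := le_trans (Nat.le_ceil y) (by exact_mod_cast hn)
    rw [max_eq_right (by linarith)]

lemma callFn_add_eq_max (hμ : MemM μ) (x : ℝ) : callFn μ x + x = ∫ y, max y x ∂μ := by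
  haveI := hμ.1
  have : ∀ y : ℝ, max (y - x) 0 + x = max y x := by
    intro y
    rcases le_total y x with h | h
    · rw [max_eq_right (by linarith), max_eq_right h]; ring
    · rw [max_eq_left (by linarith), max_eq_left h]; ring
  calc callFn μ x + x = ∫ y, (max (y - x) 0 + x) ∂μ := by
        rw [integral_add (integrable_call hμ x) (integrable_const x), integral_const]
        simp [measure_univ, callFn]
    _ = ∫ y, max y x ∂μ := by simp only [this]

lemma tendsto_callFn_add_atBot (hμ : MemM μ) :
    Tendsto (fun x => callFn μ x + x) atBot (𝓝 (meanM μ)) := by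
  haveI := hμ.1
  have hmono := callFn_add_mono hμ
  have hseq : Tendsto (fun n : ℕ => callFn μ (-(n : ℝ)) + (-(n : ℝ))) atTop (𝓝 (meanM μ)) := by
    simp only [callFn_add_eq_max hμ]
    rw [meanM]
    refine tendsto_integral_of_dominated_convergence (fun y => |y|)
      (fun n => (Continuous.aestronglyMeasurable (by continuity))) (hμ.2.abs) (fun n => ?_) ?_
    · refine Eventually.of_forall fun y => ?_
      rw [Real.norm_eq_abs, abs_le]
      constructor
      · have h1 : y ≤ max y (-(n : ℝ)) := le_max_left _ _
        have := neg_abs_le y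
        linarith
      · have h2 : max y (-(n : ℝ)) ≤ max y 0 := max_le_max le_rfl (neg_nonpos.mpr (Nat.cast_nonneg n))
        have h3 : max y 0 ≤ |y| := max_le (le_abs_self y) (abs_nonneg y)
        linarith
    · refine Eventually.of_forall fun y => ?_
      refine tendsto_const_nhds.congr' ?_
      filter_upwards [eventually_ge_atTop ⌈-y⌉₊] with n hn
      have : -y ≤ (n : ℝ) := le_trans (Nat.le_ceil _) (by exact_mod_cast hn)
      rw [max_eq_left (by linarith)]
  have hge : ∀ x, meanM μ ≤ callFn μ x + x := by
    intro x
    refine le_of_tendsto hseq ?_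
    filter_upwards [eventually_ge_atTop ⌈-x⌉₊] with n hn
    have : -x ≤ (n : ℝ) := le_trans (Nat.le_ceil _) (by exact_mod_cast hn)
    exact hmono (by linarith)
  have hant : Antitone (fun r : ℝ => callFn μ (-r) + (-r)) := fun r s hrs =>
    hmono (neg_le_neg hrs)
  have key := antitone_tendsto_atTop hant (by simpa using hseq) fun r => hge _
  have h2 := key.comp tendsto_neg_atBot_atTop
  simp only [Function.comp_def] at h2
  refine h2.congr fun x => ?_
  rw [neg_neg]


lemma tendsto_diff_callFn (hμ : MemM μ) (x : ℝ) :
    Tendsto (fun n : ℕ => ((n : ℝ) + 1) * (callFn μ x - callFn μ (x + 1 / ((n : ℝ) + 1))))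
      atTop (𝓝 ((μ (Ioi x)).toReal)) := by
  haveI := hμ.1
  have hpos : ∀ n : ℕ, (0 : ℝ) < (n : ℝ) + 1 := fun n => by positivity
  have key : ∀ n : ℕ, ((n : ℝ) + 1) * (callFn μ x - callFn μ (x + 1 / ((n : ℝ) + 1)))
      = ∫ y, ((n : ℝ) + 1) * (max (y - x) 0 - max (y - (x + 1 / ((n : ℝ) + 1))) 0) ∂μ := by
    intro n
    rw [callFn, callFn, ← integral_sub (integrable_call hμ x) (integrable_call hμ _),
      integral_const_mul]
  simp only [key]
  have hind : (μ (Ioi x)).toReal = ∫ y, Set.indicator (Ioi x) (fun _ => (1 : ℝ)) y ∂μ := by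
    rw [integral_indicator_const _ measurableSet_Ioi]; simp; rfl
  rw [hind]
  refine tendsto_integral_of_dominated_convergence (fun _ => (1 : ℝ))
    (fun n => (Continuous.aestronglyMeasurable (by continuity))) (integrable_const 1)
    (fun n => ?_) ?_
  · refine Eventually.of_forall fun y => ?_
    rw [Real.norm_eq_abs, abs_mul, abs_of_pos (hpos n)]
    have h1 : |max (y - x) 0 - max (y - (x + 1 / ((n : ℝ) + 1))) 0|
        ≤ |(y - x) - (y - (x + 1 / ((n : ℝ) + 1)))| := abs_max_sub_max_le_abs _ _ _
    have h2 : |(y - x) - (y - (x + 1 / ((n : ℝ) + 1)))| = 1 / ((n : ℝ) + 1) := by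
      rw [show (y - x) - (y - (x + 1 / ((n : ℝ) + 1))) = 1 / ((n : ℝ) + 1) by ring]
      exact abs_of_pos (by positivity)
    calc ((n : ℝ) + 1) * |max (y - x) 0 - max (y - (x + 1 / ((n : ℝ) + 1))) 0|
        ≤ ((n : ℝ) + 1) * (1 / ((n : ℝ) + 1)) :=
          mul_le_mul_of_nonneg_left (h1.trans (le_of_eq h2)) (hpos n).le
      _ = 1 := by field_simp
  · refine Eventually.of_forall fun y => ?_
    refine tendsto_const_nhds.congr' ?_
    rcases le_or_gt y x with hy | hy
    · refine Eventually.of_forall fun n => ?_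
      have e1 : max (y - x) 0 = 0 := max_eq_right (by linarith)
      have e2 : max (y - (x + 1 / ((n : ℝ) + 1))) 0 = 0 :=
        max_eq_right (by have := (hpos n); have : (0:ℝ) < 1 / ((n : ℝ) + 1) := by positivity
                         linarith)
      have hy' : y ∉ Ioi x := by simpa using hy.not_gt
      show (Ioi x).indicator (fun _ => (1:ℝ)) y
        = ((n:ℝ) + 1) * (max (y - x) 0 - max (y - (x + 1 / ((n:ℝ) + 1))) 0)
      rw [Set.indicator_of_notMem hy', e1, e2]
      ring
    · filter_upwards [eventually_ge_atTop ⌈1 / (y - x)⌉₊] with n hn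
      have hh : 1 / ((n : ℝ) + 1) ≤ y - x := by
        have h3 : 1 / (y - x) ≤ (n : ℝ) := le_trans (Nat.le_ceil _) (by exact_mod_cast hn)
        rw [div_le_iff₀ (hpos n)]
        rw [div_le_iff₀ (by linarith : (0:ℝ) < y - x)] at h3
        nlinarith
      have e1 : max (y - x) 0 = y - x := max_eq_left (by linarith)
      have e2 : max (y - (x + 1 / ((n : ℝ) + 1))) 0 = y - (x + 1 / ((n : ℝ) + 1)) :=
        max_eq_left (by linarith)
      show (Ioi x).indicator (fun _ => (1:ℝ)) y
        = ((n:ℝ) + 1) * (max (y - x) 0 - max (y - (x + 1 / ((n:ℝ) + 1))) 0)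
      rw [Set.indicator_of_mem (mem_Ioi.mpr hy), e1, e2]
      field_simp
      ring

lemma measure_eq_of_callFn_eq (hμ : MemM μ) (hν : MemM ν)
    (h : ∀ x, callFn μ x = callFn ν x) : μ = ν := by
  haveI := hμ.1; haveI := hν.1
  have hIoi : ∀ x, μ (Ioi x) = ν (Ioi x) := by
    intro x
    have h1 := tendsto_diff_callFn hμ x
    have h2 := tendsto_diff_callFn hν x
    simp only [h] at h1
    have h3 := tendsto_nhds_unique h1 h2
    exact (ENNReal.toReal_eq_toReal_iff' (measure_ne_top μ _) (measure_ne_top ν _)).mp h3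
  refine MeasureTheory.ext_of_generate_finite (Set.range Set.Ioi) ?_ ?_ ?_ ?_
  · rw [← borel_eq_generateFrom_Ioi]
    exact BorelSpace.measurable_eq
  · rintro _ ⟨a, rfl⟩ _ ⟨b, rfl⟩ _
    exact ⟨max a b, by rw [Ioi_inter_Ioi]⟩
  · rintro _ ⟨a, rfl⟩
    exact hIoi a
  · simp [measure_univ]


section ConvexPart

variable {φ : ℝ → ℝ}

lemma convex_hasRightDeriv_aux (hφ : ConvexOn ℝ univ φ) (x : ℝ) :
    HasDerivWithinAt φ (sInf (slope φ x '' Ioi x)) (Ioi x) x := by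
  have hmono : MonotoneOn (slope φ x) (Ioi x) :=
    (hφ.slope_mono (mem_univ x)).mono fun y hy => ⟨mem_univ y, ne_of_gt hy⟩
  have hbdd : BddBelow (slope φ x '' Ioi x) := by
    refine ⟨slope φ x (x - 1), ?_⟩
    rintro _ ⟨y, hy, rfl⟩
    refine (hφ.slope_mono (mem_univ x)) ⟨mem_univ _, ?_⟩ ⟨mem_univ y, ne_of_gt hy⟩
      (by linarith [mem_Ioi.mp hy])
    intro hmem
    rw [mem_singleton_iff] at hmem
    linarith
  exact (hasDerivWithinAt_iff_tendsto_slope' notMem_Ioi_self).mpr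
    (MonotoneOn.tendsto_nhdsGT hmono hbdd)

lemma rd_hasDeriv (hφ : ConvexOn ℝ univ φ) (x : ℝ) :
    HasDerivWithinAt φ (rderiv φ x) (Ioi x) x := by
  have h := convex_hasRightDeriv_aux hφ x
  have h2 : rderiv φ x = sInf (slope φ x '' Ioi x) :=
    h.derivWithin (uniqueDiffWithinAt_Ioi x)
  rwa [← h2] at h

lemma rd_tendsto_slope (hφ : ConvexOn ℝ univ φ) (x : ℝ) :
    Tendsto (slope φ x) (𝓝[>] x) (𝓝 (rderiv φ x)) :=
  (hasDerivWithinAt_iff_tendsto_slope' notMem_Ioi_self).mp (rd_hasDeriv hφ x)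

lemma rd_le_slope (hφ : ConvexOn ℝ univ φ) {x y : ℝ} (hxy : x < y) :
    rderiv φ x ≤ slope φ x y :=
  hφ.le_slope_of_hasDerivWithinAt_Ioi (mem_univ x) (mem_univ y) hxy (rd_hasDeriv hφ x)

lemma slope_le_rd (hφ : ConvexOn ℝ univ φ) {x y : ℝ} (hxy : x < y) :
    slope φ x y ≤ rderiv φ y := by
  have h1 : ∀ z, y < z → slope φ x y ≤ slope φ y z := by
    intro z hz
    rw [slope_comm]
    exact (hφ.slope_mono (mem_univ y)) ⟨mem_univ x, ne_of_lt hxy⟩ ⟨mem_univ z, ne_of_gt hz⟩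
      (by linarith)
  refine ge_of_tendsto (rd_tendsto_slope hφ y) ?_
  filter_upwards [self_mem_nhdsWithin] with z hz using h1 z hz

lemma rd_mono (hφ : ConvexOn ℝ univ φ) : Monotone (rderiv φ) := by
  intro x y hxy
  rcases eq_or_lt_of_le hxy with rfl | h
  · exact le_rfl
  · exact (rd_le_slope hφ h).trans (slope_le_rd hφ h)

lemma convex_continuous (hφ : ConvexOn ℝ univ φ) : Continuous φ := by
  rw [← continuousOn_univ]
  exact hφ.continuousOn isOpen_univ

lemma rd_rightLim (hφ : ConvexOn ℝ univ φ) (x : ℝ) :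
    Function.rightLim (rderiv φ) x = rderiv φ x := by
  have hmono := rd_mono hφ
  refine le_antisymm ?_ (hmono.le_rightLim le_rfl)
  have hc := convex_continuous hφ
  have h1 : ∀ y, x < y → Function.rightLim (rderiv φ) x ≤ slope φ x y := by
    intro y hy
    have htd : Tendsto (rderiv φ) (𝓝[>] x) (𝓝 (Function.rightLim (rderiv φ) x)) :=
      hmono.tendsto_rightLim x
    have hslope : Tendsto (fun t => slope φ t y) (𝓝[>] x) (𝓝 (slope φ x y)) := by
      have hca : ContinuousAt (fun t => (φ y - φ t) / (y - t)) x :=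
        ContinuousAt.div ((continuous_const.sub hc).continuousAt)
          ((continuous_const.sub continuous_id).continuousAt) (sub_ne_zero.mpr (ne_of_gt hy))
      have h5 : Tendsto (fun t => (φ y - φ t) / (y - t)) (𝓝[>] x)
          (𝓝 ((φ y - φ x) / (y - x))) := (hca.tendsto).mono_left nhdsWithin_le_nhds
      have h6 : slope φ x y = (φ y - φ x) / (y - x) := slope_def_field φ x y
      rw [h6]
      exact h5.congr fun t => (slope_def_field φ t y).symm
    refine le_of_tendsto_of_tendsto htd hslope ?_
    filter_upwards [Ioo_mem_nhdsGT_of_mem (show x ∈ Ico x y from ⟨le_refl x, hy⟩)] with t ht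
    exact rd_le_slope hφ ht.2
  refine ge_of_tendsto (rd_tendsto_slope hφ x) ?_
  filter_upwards [self_mem_nhdsWithin] with y hy using h1 y hy

lemma rd_ftc (hφ : ConvexOn ℝ univ φ) {u v : ℝ} (huv : u ≤ v) :
    ∫ t in u..v, rderiv φ t = φ v - φ u := by
  refine intervalIntegral.integral_eq_sub_of_hasDeriv_right_of_le huv
    ((convex_continuous hφ).continuousOn) (fun t _ => rd_hasDeriv hφ t)
    ((rd_mono hφ).intervalIntegrable)

lemma ofReal_max0 (a : ℝ) : ENNReal.ofReal (max a 0) = ENNReal.ofReal a := by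
  rcases le_total a 0 with h | h
  · rw [max_eq_right h, ENNReal.ofReal_zero, ENNReal.ofReal_of_nonpos h]
  · rw [max_eq_left h]

/-- second-derivative measure of a convex function -/
noncomputable def sdm (hφ : ConvexOn ℝ univ φ) : Measure ℝ :=
  ((rd_mono hφ).stieltjesFunction).measure

lemma sdm_Ioc (hφ : ConvexOn ℝ univ φ) {a b : ℝ} :
    sdm hφ (Ioc a b) = ENNReal.ofReal (rderiv φ b - rderiv φ a) := by
  rw [sdm, StieltjesFunction.measure_Ioc, Monotone.stieltjesFunction_eq,
    Monotone.stieltjesFunction_eq, rd_rightLim hφ, rd_rightLim hφ]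

lemma repr_right (hφ : ConvexOn ℝ univ φ) {m y : ℝ} (hy : m ≤ y) :
    ENNReal.ofReal (φ y - φ m - rderiv φ m * (y - m))
      = ∫⁻ s in Ioi m, ENNReal.ofReal (max (y - s) 0) ∂(sdm hφ) := by
  haveI : SigmaFinite (sdm hφ) := by rw [sdm]; infer_instance
  have hmono := rd_mono hφ
  have hiint : IntervalIntegrable (fun t => rderiv φ t - rderiv φ m) volume m y :=
    (hmono.intervalIntegrable).sub intervalIntegrable_const
  have h1 : φ y - φ m - rderiv φ m * (y - m) = ∫ t in Ioc m y, (rderiv φ t - rderiv φ m) := by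
    have h2 : ∫ t in m..y, (rderiv φ t - rderiv φ m) = (φ y - φ m) - (y - m) * rderiv φ m := by
      rw [intervalIntegral.integral_sub (hmono.intervalIntegrable) intervalIntegrable_const,
        rd_ftc hφ hy, intervalIntegral.integral_const, smul_eq_mul]
    rw [← intervalIntegral.integral_of_le hy, h2]
    ring
  rw [h1, MeasureTheory.ofReal_integral_eq_lintegral_ofReal (hiint.1)
    ((ae_restrict_iff' measurableSet_Ioc).mpr
      (Eventually.of_forall fun t ht => sub_nonneg.2 (hmono ht.1.le)))]
  have h3 : ∫⁻ t in Ioc m y, ENNReal.ofReal (rderiv φ t - rderiv φ m)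
      = ∫⁻ t in Ioc m y, (sdm hφ) (Ioc m t) := by
    refine setLIntegral_congr_fun measurableSet_Ioc (fun t ht => ?_)
    rw [sdm_Ioc hφ]
  rw [h3]
  have h4 : ∀ t : ℝ, (sdm hφ) (Ioc m t) = ∫⁻ s, (Ioc m t).indicator 1 s ∂(sdm hφ) := by
    intro t
    rw [lintegral_indicator_one measurableSet_Ioc]
  simp_rw [h4]
  rw [lintegral_lintegral_swap]
  · have inner1 : ∀ s : ℝ, (∫⁻ t in Ioc m y, (Ioc m t).indicator 1 s)
        = (Ioi m).indicator (fun s => ENNReal.ofReal (y - s)) s := by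
      intro s
      rcases le_or_gt s m with hs | hs
      · rw [Set.indicator_of_notMem (by simpa using hs.not_gt)]
        rw [setLIntegral_congr_fun measurableSet_Ioc (fun t ht =>
          Set.indicator_of_notMem (fun hc => absurd hc.1 hs.not_gt) _)]
        simp
      · rw [Set.indicator_of_mem (mem_Ioi.mpr hs)]
        have key : ∀ t : ℝ, (Ioc m t).indicator (1 : ℝ → ℝ≥0∞) s
            = (Ici s).indicator (1 : ℝ → ℝ≥0∞) t := by
          intro t
          by_cases h : s ≤ t
          · rw [Set.indicator_of_mem (show s ∈ Ioc m t from ⟨hs, h⟩),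
              Set.indicator_of_mem (show t ∈ Ici s from h)]
            rfl
          · rw [Set.indicator_of_notMem (show s ∉ Ioc m t from fun hc => h hc.2),
              Set.indicator_of_notMem (show t ∉ Ici s from fun hc => h hc)]
        simp_rw [key]
        rw [lintegral_indicator_one measurableSet_Ici, Measure.restrict_apply measurableSet_Ici]
        have hset : Ici s ∩ Ioc m y = Icc s y := by
          ext t
          simp only [mem_inter_iff, mem_Ici, mem_Ioc, mem_Icc]
          constructor
          · rintro ⟨h1', h2'⟩; exact ⟨h1', h2'.2⟩
          · rintro ⟨h1', h2'⟩; exact ⟨h1', lt_of_lt_of_le hs h1', h2'⟩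
        rw [hset, Real.volume_Icc]
    simp_rw [inner1]
    rw [lintegral_indicator measurableSet_Ioi]
    refine setLIntegral_congr_fun measurableSet_Ioi (fun s _ => ?_)
    rw [ofReal_max0]
  · have hSmeas : MeasurableSet {p : ℝ × ℝ | m < p.2 ∧ p.2 ≤ p.1} :=
      (measurableSet_lt measurable_const measurable_snd).inter
        (measurableSet_le measurable_snd measurable_fst)
    have : (Function.uncurry fun t s => (Ioc m t).indicator (1 : ℝ → ℝ≥0∞) s)
        = Set.indicator {p : ℝ × ℝ | m < p.2 ∧ p.2 ≤ p.1} 1 := by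
      funext p
      by_cases hp : m < p.2 ∧ p.2 ≤ p.1 <;>
        simp [Function.uncurry, Set.indicator_apply, Set.mem_Ioc, hp]
    rw [this]
    exact (measurable_one.indicator hSmeas).aemeasurable

lemma repr_left (hφ : ConvexOn ℝ univ φ) {m y : ℝ} (hy : y ≤ m) :
    ENNReal.ofReal (φ y - φ m - rderiv φ m * (y - m))
      = ∫⁻ s in Iic m, ENNReal.ofReal (max (s - y) 0) ∂(sdm hφ) := by
  haveI : SigmaFinite (sdm hφ) := by rw [sdm]; infer_instance
  have hmono := rd_mono hφ
  have hiint : IntervalIntegrable (fun t => rderiv φ m - rderiv φ t) volume y m :=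
    intervalIntegrable_const.sub (hmono.intervalIntegrable)
  have h1 : φ y - φ m - rderiv φ m * (y - m) = ∫ t in Ioc y m, (rderiv φ m - rderiv φ t) := by
    have h2 : ∫ t in y..m, (rderiv φ m - rderiv φ t) = (m - y) * rderiv φ m - (φ m - φ y) := by
      rw [intervalIntegral.integral_sub intervalIntegrable_const (hmono.intervalIntegrable),
        rd_ftc hφ hy, intervalIntegral.integral_const, smul_eq_mul]
    rw [← intervalIntegral.integral_of_le hy, h2]
    ring
  rw [h1, MeasureTheory.ofReal_integral_eq_lintegral_ofReal (hiint.1)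
    ((ae_restrict_iff' measurableSet_Ioc).mpr
      (Eventually.of_forall fun t ht => sub_nonneg.2 (hmono ht.2)))]
  have h3 : ∫⁻ t in Ioc y m, ENNReal.ofReal (rderiv φ m - rderiv φ t)
      = ∫⁻ t in Ioc y m, (sdm hφ) (Ioc t m) := by
    refine setLIntegral_congr_fun measurableSet_Ioc (fun t ht => ?_)
    rw [sdm_Ioc hφ]
  rw [h3]
  have h4 : ∀ t : ℝ, (sdm hφ) (Ioc t m) = ∫⁻ s, (Ioc t m).indicator 1 s ∂(sdm hφ) := by
    intro t
    rw [lintegral_indicator_one measurableSet_Ioc]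
  simp_rw [h4]
  rw [lintegral_lintegral_swap]
  · have inner1 : ∀ s : ℝ, (∫⁻ t in Ioc y m, (Ioc t m).indicator 1 s)
        = (Iic m).indicator (fun s => ENNReal.ofReal (s - y)) s := by
      intro s
      rcases le_or_gt s m with hs | hs
      · rw [Set.indicator_of_mem (mem_Iic.mpr hs)]
        have key : ∀ t : ℝ, (Ioc t m).indicator (1 : ℝ → ℝ≥0∞) s
            = (Iio s).indicator (1 : ℝ → ℝ≥0∞) t := by
          intro t
          by_cases h : t < s
          · rw [Set.indicator_of_mem (show s ∈ Ioc t m from ⟨h, hs⟩),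
              Set.indicator_of_mem (show t ∈ Iio s from h)]
            rfl
          · rw [Set.indicator_of_notMem (show s ∉ Ioc t m from fun hc => h hc.1),
              Set.indicator_of_notMem (show t ∉ Iio s from fun hc => h hc)]
        simp_rw [key]
        rw [lintegral_indicator_one measurableSet_Iio, Measure.restrict_apply measurableSet_Iio]
        have hset : Iio s ∩ Ioc y m = Ioo y s := by
          ext t
          simp only [mem_inter_iff, mem_Iio, mem_Ioc, mem_Ioo]
          constructor
          · rintro ⟨h1', h2'⟩; exact ⟨h2'.1, h1'⟩
          · rintro ⟨h1', h2'⟩; exact ⟨h2', h1', le_trans (le_of_lt h2') hs⟩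
        rw [hset, Real.volume_Ioo]
      · rw [Set.indicator_of_notMem (by simpa using hs.not_ge)]
        rw [setLIntegral_congr_fun measurableSet_Ioc (fun t ht =>
          Set.indicator_of_notMem (fun hc => absurd hc.2 hs.not_ge) _)]
        simp
    simp_rw [inner1]
    rw [lintegral_indicator measurableSet_Iic]
    refine setLIntegral_congr_fun measurableSet_Iic (fun s _ => ?_)
    rw [ofReal_max0]
  · have hSmeas : MeasurableSet {p : ℝ × ℝ | p.1 < p.2 ∧ p.2 ≤ m} :=
      (measurableSet_lt measurable_fst measurable_snd).inter
        (measurableSet_le measurable_snd measurable_const)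
    have : (Function.uncurry fun t s => (Ioc t m).indicator (1 : ℝ → ℝ≥0∞) s)
        = Set.indicator {p : ℝ × ℝ | p.1 < p.2 ∧ p.2 ≤ m} 1 := by
      funext p
      by_cases hp : p.1 < p.2 ∧ p.2 ≤ m <;>
        simp [Function.uncurry, Set.indicator_apply, Set.mem_Ioc, hp]
    rw [this]
    exact (measurable_one.indicator hSmeas).aemeasurable

lemma repr_both (hφ : ConvexOn ℝ univ φ) (m y : ℝ) :
    ENNReal.ofReal (φ y - φ m - rderiv φ m * (y - m))
      = (∫⁻ s in Ioi m, ENNReal.ofReal (max (y - s) 0) ∂(sdm hφ))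
        + (∫⁻ s in Iic m, ENNReal.ofReal (max (s - y) 0) ∂(sdm hφ)) := by
  rcases le_total y m with hy | hy
  · rw [repr_left hφ hy]
    have : (∫⁻ s in Ioi m, ENNReal.ofReal (max (y - s) 0) ∂(sdm hφ)) = 0 := by
      have hz : ∀ s ∈ Ioi m, ENNReal.ofReal (max (y - s) 0) = 0 := fun s hs => by
        rw [max_eq_right (by linarith [mem_Ioi.mp hs]), ENNReal.ofReal_zero]
      rw [setLIntegral_congr_fun measurableSet_Ioi hz]
      simp
    rw [this, zero_add]
  · rw [repr_right hφ hy]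
    have : (∫⁻ s in Iic m, ENNReal.ofReal (max (s - y) 0) ∂(sdm hφ)) = 0 := by
      have hz : ∀ s ∈ Iic m, ENNReal.ofReal (max (s - y) 0) = 0 := fun s hs => by
        rw [max_eq_right (by linarith [mem_Iic.mp hs]), ENNReal.ofReal_zero]
      rw [setLIntegral_congr_fun measurableSet_Iic hz]
      simp
    rw [this, add_zero]

end ConvexPart


section OrderPart

lemma lintegral_psi {π : Measure ℝ} {φ : ℝ → ℝ} (hπ : MemM π) (hφ : ConvexOn ℝ univ φ)
    (m : ℝ) :
    ∫⁻ y, ENNReal.ofReal (φ y - φ m - rderiv φ m * (y - m)) ∂π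
      = (∫⁻ s in Ioi m, ENNReal.ofReal (callFn π s) ∂(sdm hφ))
        + (∫⁻ s in Iic m, ENNReal.ofReal (putFn π s) ∂(sdm hφ)) := by
  haveI := hπ.1
  haveI : SigmaFinite (sdm hφ) := by rw [sdm]; infer_instance
  have hm1 : Measurable (Function.uncurry fun y s : ℝ => ENNReal.ofReal (max (y - s) 0)) := by
    exact ((measurable_fst.sub measurable_snd).max measurable_const).ennreal_ofReal
  have hm2 : Measurable (Function.uncurry fun y s : ℝ => ENNReal.ofReal (max (s - y) 0)) := by
    exact ((measurable_snd.sub measurable_fst).max measurable_const).ennreal_ofReal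
  simp_rw [repr_both hφ m]
  rw [lintegral_add_left (Measurable.lintegral_prod_right hm1)]
  congr 1
  · rw [lintegral_lintegral_swap hm1.aemeasurable]
    refine lintegral_congr fun s => ?_
    rw [← MeasureTheory.ofReal_integral_eq_lintegral_ofReal (integrable_call hπ s)
      (Eventually.of_forall fun y => le_max_right _ _)]
    rfl
  · rw [lintegral_lintegral_swap hm2.aemeasurable]
    refine lintegral_congr fun s => ?_
    rw [← MeasureTheory.ofReal_integral_eq_lintegral_ofReal (integrable_put hπ s)
      (Eventually.of_forall fun y => le_max_right _ _)]
    rfl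

theorem convexOrder_of_callFn_le {S ν : Measure ℝ} (hS : MemM S) (hν : MemM ν)
    (hmean : meanM S = meanM ν) (hle : ∀ x, callFn S x ≤ callFn ν x) : ConvexOrder S ν := by
  intro φ hφ hIS hIν
  haveI := hS.1
  haveI := hν.1
  set m := meanM S with hm
  set c := rderiv φ m with hc
  set ψ : ℝ → ℝ := fun y => φ y - φ m - c * (y - m) with hψ
  have hψ0 : ∀ y, 0 ≤ ψ y := by
    intro y
    rcases lt_trichotomy y m with h | h | h
    · have hsl := slope_le_rd hφ h
      rw [slope_def_field] at hsl
      rw [div_le_iff₀ (by linarith : (0:ℝ) < m - y)] at hsl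
      simp only [hψ, hc]
      nlinarith
    · simp [hψ, h]
    · have hsl := rd_le_slope hφ h
      rw [slope_def_field] at hsl
      rw [le_div_iff₀ (by linarith : (0:ℝ) < y - m)] at hsl
      simp only [hψ, hc]
      nlinarith
  have hψint : ∀ (π : Measure ℝ), MemM π → Integrable φ π → Integrable ψ π := by
    intro π hπ hint
    haveI := hπ.1
    exact (hint.sub (integrable_const _)).sub ((hπ.2.sub (integrable_const m)).const_mul c)
  have hput : ∀ s, putFn S s ≤ putFn ν s := by
    intro s
    have h1 := call_sub_put hS s
    have h2 := call_sub_put hν s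
    have h3 := hle s
    rw [← hmean] at h2
    linarith
  have hlin : ∫⁻ y, ENNReal.ofReal (ψ y) ∂S ≤ ∫⁻ y, ENNReal.ofReal (ψ y) ∂ν := by
    simp only [hψ, hc]
    rw [lintegral_psi hS hφ m, lintegral_psi hν hφ m]
    refine add_le_add (lintegral_mono fun s => ENNReal.ofReal_le_ofReal (hle s))
      (lintegral_mono fun s => ENNReal.ofReal_le_ofReal (hput s))
  have hint : ∀ (π : Measure ℝ), Integrable ψ π →
      ∫ y, ψ y ∂π = (∫⁻ y, ENNReal.ofReal (ψ y) ∂π).toReal := by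
    intro π hi
    rw [← MeasureTheory.ofReal_integral_eq_lintegral_ofReal hi (Eventually.of_forall hψ0),
      ENNReal.toReal_ofReal (integral_nonneg hψ0)]
  have hfin : ∫⁻ y, ENNReal.ofReal (ψ y) ∂ν ≠ ⊤ := by
    rw [← MeasureTheory.ofReal_integral_eq_lintegral_ofReal (hψint ν hν hIν)
      (Eventually.of_forall hψ0)]
    exact ENNReal.ofReal_ne_top
  have hψle : ∫ y, ψ y ∂S ≤ ∫ y, ψ y ∂ν := by
    rw [hint S (hψint S hS hIS), hint ν (hψint ν hν hIν)]
    exact ENNReal.toReal_mono hfin hlin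
  have expand : ∀ (π : Measure ℝ), MemM π → Integrable φ π →
      ∫ y, ψ y ∂π = ∫ y, φ y ∂π - φ m - c * (meanM π - m) := by
    intro π hπ hi
    haveI := hπ.1
    have i1 : Integrable (fun y => φ y - φ m) π := hi.sub (integrable_const _)
    have i2 : Integrable (fun y : ℝ => c * (y - m)) π :=
      (hπ.2.sub (integrable_const m)).const_mul c
    have e1 : ∫ y, ψ y ∂π = ∫ y, (φ y - φ m) ∂π - ∫ y, c * (y - m) ∂π := integral_sub i1 i2
    have e2 : ∫ y, (φ y - φ m) ∂π = ∫ y, φ y ∂π - ∫ _y : ℝ, φ m ∂π :=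
      integral_sub hi (integrable_const _)
    have e3 : ∫ y : ℝ, (y - m) ∂π = ∫ y : ℝ, y ∂π - ∫ _y : ℝ, m ∂π :=
      integral_sub hπ.2 (integrable_const _)
    have e4 : ∫ y : ℝ, c * (y - m) ∂π = c * ∫ y : ℝ, (y - m) ∂π := integral_const_mul c _
    rw [e1, e2, e4, e3, integral_const, integral_const]
    simp only [measure_univ, probReal_univ, ENNReal.toReal_one, one_smul, smul_eq_mul, one_mul]
    rw [meanM]
  rw [expand S hS hIS, expand ν hν hIν, ← hmean, ← hm] at hψle
  simp only [sub_self, mul_zero] at hψle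
  linarith

end OrderPart


section Construct

lemma integrable_dirac_any (f : ℝ → ℝ) (p : ℝ) : Integrable f (Measure.dirac p) := by
  refine (integrable_const (f p)).congr ?_
  rw [Filter.EventuallyEq, MeasureTheory.ae_dirac_eq]
  exact Filter.eventually_pure.mpr rfl

lemma integrable_smul_dirac (f : ℝ → ℝ) {c : ℝ≥0∞} (hc : c ≠ ⊤) (p : ℝ) :
    Integrable f (c • Measure.dirac p) := by
  rcases eq_or_ne c 0 with rfl | h0
  · rw [zero_smul]
    exact integrable_zero_measure
  · exact (integrable_smul_measure h0 hc).mpr (integrable_dirac_any f p)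

lemma callFn_smul_dirac (c : ℝ≥0∞) (p x : ℝ) :
    callFn (c • Measure.dirac p) x = c.toReal * max (p - x) 0 := by
  rw [callFn, integral_smul_measure, integral_dirac, smul_eq_mul]

lemma setIntegral_call_zero (hμ : MemM μ) {x : ℝ} {s : Set ℝ} (hms : MeasurableSet s)
    (hs : ∀ y ∈ s, y ≤ x) : ∫ y in s, max (y - x) 0 ∂μ = 0 := by
  rw [setIntegral_congr_fun hms (fun y hy => max_eq_right (by linarith [hs y hy]))]
  simp

lemma call_split (hμ : MemM μ) {a b : ℝ} (hab : a ≤ b) (x : ℝ) :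
    callFn μ x = (∫ y in Iic a, max (y - x) 0 ∂μ) + ((∫ y in Ioc a b, max (y - x) 0 ∂μ)
      + (∫ y in Ioi b, max (y - x) 0 ∂μ)) := by
  have h1 : callFn μ x = (∫ y in Iic a, max (y - x) 0 ∂μ) + (∫ y in Ioi a, max (y - x) 0 ∂μ) := by
    rw [callFn, ← integral_add_compl measurableSet_Iic (integrable_call hμ x), compl_Iic]
  have h2 : (∫ y in Ioi a, max (y - x) 0 ∂μ) = (∫ y in Ioc a b, max (y - x) 0 ∂μ)
      + (∫ y in Ioi b, max (y - x) 0 ∂μ) := by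
    rw [← Ioc_union_Ioi_eq_Ioi hab]
    refine setIntegral_union ?_ measurableSet_Ioi ((integrable_call hμ x).integrableOn)
      ((integrable_call hμ x).integrableOn)
    exact Set.disjoint_left.mpr fun y hy hy' => absurd hy.2 (not_le.mpr (mem_Ioi.mp hy'))
  rw [h1, h2]

lemma call_tail (hμ : MemM μ) {b x : ℝ} (hxb : x ≤ b) :
    ∫ y in Ioi b, max (y - x) 0 ∂μ = callFn μ b + (b - x) * (μ (Ioi b)).toReal := by
  haveI := hμ.1
  have h1 : ∫ y in Ioi b, max (y - x) 0 ∂μ = ∫ y in Ioi b, (max (y - b) 0 + (b - x)) ∂μ := by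
    refine setIntegral_congr_fun measurableSet_Ioi fun y hy => ?_
    have hyb := mem_Ioi.mp hy
    rw [max_eq_left (by linarith), max_eq_left (by linarith)]
    ring
  rw [h1, integral_add ((integrable_call hμ b).integrableOn) (integrableOn_const
    (measure_ne_top μ _)), setIntegral_const, smul_eq_mul, measureReal_def]
  have h2 : ∫ y in Ioi b, max (y - b) 0 ∂μ = callFn μ b := by
    have h3 : callFn μ b = (∫ y in Iic b, max (y - b) 0 ∂μ) + (∫ y in Ioi b, max (y - b) 0 ∂μ) := by
      rw [callFn, ← integral_add_compl measurableSet_Iic (integrable_call hμ b), compl_Iic]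
    rw [setIntegral_call_zero hμ measurableSet_Iic (fun y hy => mem_Iic.mp hy), zero_add] at h3
    exact h3.symm
  rw [h2]
  ring

lemma exists_S {ε m : ℝ} (hε : 0 < ε) (hμ : MemM μ) (hm : meanM μ - ε ≤ m)
    (hm' : m ≤ meanM μ + ε) :
    ∃ S : Measure ℝ, MemM S ∧ ∀ x, callFn S x = max (max (m - x) 0) (callFn μ x - ε) := by
  haveI := hμ.1
  rcases le_or_gt (callFn μ m) ε with hcase | hcase
  · -- degenerate case : S = δ_m
    refine ⟨Measure.dirac m, ⟨by infer_instance, integrable_dirac_any _ m⟩, fun x => ?_⟩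
    rw [callFn, integral_dirac]
    refine (max_eq_left ?_).symm
    rcases le_total x m with hx | hx
    · have h1 : callFn μ x + x ≤ callFn μ m + m := callFn_add_mono hμ hx
      have h2 : callFn μ x - ε ≤ m - x + (callFn μ m - ε) := by linarith
      calc callFn μ x - ε ≤ m - x := by linarith
        _ ≤ max (m - x) 0 := le_max_left _ _
    · have h1 : callFn μ x ≤ callFn μ m := callFn_antitone hμ hx
      calc callFn μ x - ε ≤ 0 := by linarith
        _ ≤ max (m - x) 0 := le_max_right _ _
  · -- main case
    -- find b ≥ m with callFn μ b = ε
    obtain ⟨M, hMm, hMε⟩ : ∃ M, m ≤ M ∧ callFn μ M < ε := by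
      have h1 := (tendsto_callFn_atTop hμ).eventually_lt_const hε
      obtain ⟨M, hM1, hM2⟩ := ((eventually_ge_atTop m).and h1).exists
      exact ⟨M, hM1, hM2⟩
    obtain ⟨b, hbmem, hbval⟩ : ∃ b ∈ Icc m M, callFn μ b = ε := by
      have := intermediate_value_Icc' hMm ((callFn_continuous hμ).continuousOn)
      have hmem : ε ∈ Icc (callFn μ M) (callFn μ m) := ⟨hMε.le, hcase.le⟩
      obtain ⟨b, hb1, hb2⟩ := this hmem
      exact ⟨b, hb1, hb2⟩
    have hbm : m ≤ b := hbmem.1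
    set h : ℝ → ℝ := fun x => callFn μ x + x - (m + ε) with hh
    have hhmono : Monotone h := fun x y hxy => by
      have h1 := callFn_add_mono hμ hxy
      change callFn μ x + x ≤ callFn μ y + y at h1
      simp only [hh]
      linarith
    have hhb : 0 ≤ h b := by simp only [hh]; rw [hbval]; linarith
    have hhcont : Continuous h := by
      refine Continuous.sub ?_ continuous_const
      exact (callFn_continuous hμ).add continuous_id
    by_cases hA : ∃ x₀, h x₀ ≤ 0
    · -- case II.A
      obtain ⟨x₀, hx₀⟩ := hA
      obtain ⟨a, hab, hha⟩ : ∃ a, a ≤ b ∧ h a = 0 := by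
        rcases le_or_gt x₀ b with hx₀b | hx₀b
        · have := intermediate_value_Icc hx₀b hhcont.continuousOn
          obtain ⟨a, ha1, ha2⟩ := this (⟨hx₀, hhb⟩ : (0:ℝ) ∈ Icc (h x₀) (h b))
          exact ⟨a, ha1.2, ha2⟩
        · refine ⟨b, le_rfl, le_antisymm ?_ hhb⟩
          calc h b ≤ h x₀ := hhmono hx₀b.le
            _ ≤ 0 := hx₀
      have hkey : callFn μ a - ε = m - a := by simp only [hh] at hha; linarith
      have ham : a ≤ m := by
        have h1 : callFn μ b ≤ callFn μ a := callFn_antitone hμ hab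
        rw [hbval] at h1
        linarith
      -- the measure
      set S : Measure ℝ := μ.restrict (Ioc a b) + μ (Iic a) • Measure.dirac a
        + μ (Ioi b) • Measure.dirac b with hS
      have hSunivsum : μ (Ioc a b) + μ (Iic a) + μ (Ioi b) = 1 := by
        have d1 : Disjoint (Iic a) (Ioc a b) :=
          Set.disjoint_left.mpr fun y hy hy' => absurd hy'.1 (not_lt.mpr (mem_Iic.mp hy))
        have d2 : Disjoint (Iic b) (Ioi b) :=
          Set.disjoint_left.mpr fun y hy hy' => absurd (mem_Ioi.mp hy') (not_lt.mpr hy)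
        have e1 : μ (Iic a) + μ (Ioc a b) = μ (Iic b) := by
          rw [← measure_union d1 measurableSet_Ioc, Iic_union_Ioc_eq_Iic hab]
        have e2 : μ (Iic b) + μ (Ioi b) = 1 := by
          rw [← measure_union d2 measurableSet_Ioi, Iic_union_Ioi, measure_univ]
        calc μ (Ioc a b) + μ (Iic a) + μ (Ioi b) = μ (Iic a) + μ (Ioc a b) + μ (Ioi b) := by
              rw [add_comm (μ (Ioc a b))]
          _ = 1 := by rw [e1, e2]
      have hSprob : IsProbabilityMeasure S := by
        constructor
        rw [hS]
        simp only [Measure.add_apply, Measure.smul_apply, smul_eq_mul,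
          Measure.restrict_apply_univ, MeasureTheory.Measure.dirac_apply_of_mem (mem_univ a),
          MeasureTheory.Measure.dirac_apply_of_mem (mem_univ b), mul_one]
        exact hSunivsum
      have hSint : Integrable (fun y : ℝ => y) S := by
        rw [hS]
        refine Integrable.add_measure (Integrable.add_measure ?_ ?_) ?_
        · exact hμ.2.restrict
        · exact integrable_smul_dirac _ (measure_ne_top μ _) a
        · exact integrable_smul_dirac _ (measure_ne_top μ _) b
      refine ⟨S, ⟨hSprob, hSint⟩, fun x => ?_⟩
      -- sum formula for callFn S
      have hcallS : callFn S x = (∫ y in Ioc a b, max (y - x) 0 ∂μ)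
          + (μ (Iic a)).toReal * max (a - x) 0 + (μ (Ioi b)).toReal * max (b - x) 0 := by
        rw [hS, callFn, integral_add_measure (Integrable.add_measure
          ((integrable_call hμ x).restrict) (integrable_smul_dirac _ (measure_ne_top μ _) a))
          (integrable_smul_dirac _ (measure_ne_top μ _) b),
          integral_add_measure ((integrable_call hμ x).restrict)
          (integrable_smul_dirac _ (measure_ne_top μ _) a)]
        rw [show ∫ y, max (y - x) 0 ∂(μ (Iic a) • Measure.dirac a)
            = callFn (μ (Iic a) • Measure.dirac a) x from rfl, callFn_smul_dirac]
        rw [show ∫ y, max (y - x) 0 ∂(μ (Ioi b) • Measure.dirac b)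
            = callFn (μ (Ioi b) • Measure.dirac b) x from rfl, callFn_smul_dirac]
      -- real-valued partition identity
      have hsum : (μ (Iic a)).toReal + (μ (Ioc a b)).toReal + (μ (Ioi b)).toReal = 1 := by
        have h1 : ((μ (Ioc a b)) + (μ (Iic a)) + (μ (Ioi b))).toReal = 1 := by
          rw [hSunivsum]; simp
        rw [ENNReal.toReal_add (ENNReal.add_ne_top.mpr ⟨measure_ne_top μ _, measure_ne_top μ _⟩)
          (measure_ne_top μ _), ENNReal.toReal_add (measure_ne_top μ _) (measure_ne_top μ _)]
          at h1
        linarith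
      rcases le_total x a with hxa | hxa
      · -- region x ≤ a : value m - x
        have hv1 : ∫ y in Ioc a b, max (y - x) 0 ∂μ
            = (∫ y in Ioc a b, max (y - a) 0 ∂μ) + (a - x) * (μ (Ioc a b)).toReal := by
          have : ∀ y ∈ Ioc a b, max (y - x) 0 = max (y - a) 0 + (a - x) := by
            intro y hy
            have := hy.1
            rw [max_eq_left (by linarith), max_eq_left (by linarith)]
            ring
          rw [setIntegral_congr_fun measurableSet_Ioc this,
            integral_add ((integrable_call hμ a).integrableOn)
            (integrableOn_const (measure_ne_top μ _)), setIntegral_const,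
            smul_eq_mul, measureReal_def]
          ring
        have hv2 : callFn μ a = (∫ y in Ioc a b, max (y - a) 0 ∂μ)
            + (callFn μ b + (b - a) * (μ (Ioi b)).toReal) := by
          have := call_split hμ hab a
          rw [setIntegral_call_zero hμ measurableSet_Iic (fun y hy => mem_Iic.mp hy),
            zero_add, call_tail hμ hab] at this
          linarith [this]
        have hmax : max (max (m - x) 0) (callFn μ x - ε) = m - x := by
          have hxm : x ≤ m := le_trans hxa ham
          have hle1 : callFn μ x - ε ≤ m - x := by
            have := hhmono hxa
            rw [hha] at this
            simp only [hh] at this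
            linarith
          rw [show max (m - x) 0 = m - x from max_eq_left (by linarith)]
          exact max_eq_left hle1
        rw [hcallS, hv1, hmax, max_eq_left (by linarith : (0:ℝ) ≤ a - x),
          max_eq_left (by linarith : (0:ℝ) ≤ b - x)]
        rw [hbval] at hv2
        nlinarith [hsum, hkey, hv2]
      · rcases le_total x b with hxb | hxb
        · -- region a ≤ x ≤ b : value callFn μ x - ε
          have hv2 : callFn μ x = (∫ y in Ioc a b, max (y - x) 0 ∂μ)
              + (callFn μ b + (b - x) * (μ (Ioi b)).toReal) := by
            have := call_split hμ hab x
            rw [setIntegral_call_zero hμ measurableSet_Iic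
              (fun y hy => le_trans (mem_Iic.mp hy) hxa), zero_add, call_tail hμ hxb] at this
            linarith [this]
          have hmax : max (max (m - x) 0) (callFn μ x - ε) = callFn μ x - ε := by
            have hge0 : 0 ≤ callFn μ x - ε := by
              have h1 : callFn μ b ≤ callFn μ x := callFn_antitone hμ hxb
              rw [hbval] at h1
              linarith
            have hgem : m - x ≤ callFn μ x - ε := by
              have := hhmono hxa
              rw [hha] at this
              simp only [hh] at this
              linarith
            exact max_eq_right (max_le hgem hge0)
          rw [hcallS, hmax, max_eq_right (by linarith : a - x ≤ 0),
            max_eq_left (by linarith : (0:ℝ) ≤ b - x)]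
          rw [hbval] at hv2
          linarith [hv2]
        · -- region b ≤ x : value 0
          have hmax : max (max (m - x) 0) (callFn μ x - ε) = 0 := by
            have h1 : callFn μ x ≤ callFn μ b := callFn_antitone hμ hxb
            rw [hbval] at h1
            rw [max_eq_right (by linarith : m - x ≤ 0)]
            exact max_eq_left (by linarith)
          rw [hcallS, hmax, max_eq_right (by linarith : a - x ≤ 0),
            max_eq_right (by linarith : b - x ≤ 0),
            setIntegral_call_zero hμ measurableSet_Ioc
              (fun y hy => le_trans hy.2 hxb)]
          ring
    · -- case II.B : h > 0 everywhere, m = meanM μ - ε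
      push_neg at hA
      have hmeq : m = meanM μ - ε := by
        have h1 : meanM μ ≥ m + ε := by
          refine ge_of_tendsto (tendsto_callFn_add_atBot hμ) ?_
          refine Eventually.of_forall fun x => ?_
          have := hA x
          simp only [hh] at this
          linarith
        linarith
      set S : Measure ℝ := μ.restrict (Iic b) + μ (Ioi b) • Measure.dirac b with hS
      have hSprob : IsProbabilityMeasure S := by
        constructor
        rw [hS]
        simp only [Measure.add_apply, Measure.smul_apply, smul_eq_mul,
          Measure.restrict_apply_univ, MeasureTheory.Measure.dirac_apply_of_mem (mem_univ b),
          mul_one]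
        have d2 : Disjoint (Iic b) (Ioi b) :=
          Set.disjoint_left.mpr fun y hy hy' => absurd (mem_Ioi.mp hy') (not_lt.mpr hy)
        rw [← measure_union d2 measurableSet_Ioi, Iic_union_Ioi, measure_univ]
      have hSint : Integrable (fun y : ℝ => y) S := by
        rw [hS]
        exact Integrable.add_measure (hμ.2.restrict)
          (integrable_smul_dirac _ (measure_ne_top μ _) b)
      refine ⟨S, ⟨hSprob, hSint⟩, fun x => ?_⟩
      have hcallS : callFn S x = (∫ y in Iic b, max (y - x) 0 ∂μ)
          + (μ (Ioi b)).toReal * max (b - x) 0 := by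
        rw [hS, callFn, integral_add_measure ((integrable_call hμ x).restrict)
          (integrable_smul_dirac _ (measure_ne_top μ _) b)]
        rw [show ∫ y, max (y - x) 0 ∂(μ (Ioi b) • Measure.dirac b)
            = callFn (μ (Ioi b) • Measure.dirac b) x from rfl, callFn_smul_dirac]
      rcases le_total x b with hxb | hxb
      · -- x ≤ b : value callFn μ x - ε
        have hv : callFn μ x = (∫ y in Iic b, max (y - x) 0 ∂μ)
            + (callFn μ b + (b - x) * (μ (Ioi b)).toReal) := by
          have h1 : callFn μ x = (∫ y in Iic b, max (y - x) 0 ∂μ)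
              + (∫ y in Ioi b, max (y - x) 0 ∂μ) := by
            rw [callFn, ← integral_add_compl measurableSet_Iic (integrable_call hμ x), compl_Iic]
          rw [h1, call_tail hμ hxb]
        have hmax : max (max (m - x) 0) (callFn μ x - ε) = callFn μ x - ε := by
          have hge0 : 0 ≤ callFn μ x - ε := by
            have h1 : callFn μ b ≤ callFn μ x := callFn_antitone hμ hxb
            rw [hbval] at h1
            linarith
          have hgem : m - x ≤ callFn μ x - ε := by
            have := hA x
            simp only [hh] at this
            linarith
          exact max_eq_right (max_le hgem hge0)
        rw [hcallS, hmax, max_eq_left (by linarith : (0:ℝ) ≤ b - x)]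
        rw [hbval] at hv
        linarith [hv]
      · -- b ≤ x : value 0
        have hmax : max (max (m - x) 0) (callFn μ x - ε) = 0 := by
          have h1 : callFn μ x ≤ callFn μ b := callFn_antitone hμ hxb
          rw [hbval] at h1
          rw [max_eq_right (by linarith : m - x ≤ 0)]
          exact max_eq_left (by linarith)
        rw [hcallS, hmax, max_eq_right (by linarith : b - x ≤ 0),
          setIntegral_call_zero hμ measurableSet_Iic (fun y hy => le_trans (mem_Iic.mp hy) hxb)]
        ring

end Construct


section Assemble

lemma mean_from_formula {S : Measure ℝ} {ε m : ℝ} (hμ : MemM μ) (hS : MemM S)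
    (hm : meanM μ - ε ≤ m)
    (hform : ∀ x, callFn S x = max (max (m - x) 0) (callFn μ x - ε)) : meanM S = m := by
  have h1 := tendsto_callFn_add_atBot hS
  have h2 : Tendsto (fun x => callFn S x + x) atBot (𝓝 m) := by
    have h3 : Tendsto (fun x => max m (callFn μ x + x - ε)) atBot (𝓝 (max m (meanM μ - ε))) :=
      tendsto_const_nhds.max ((tendsto_callFn_add_atBot hμ).sub_const ε)
    rw [max_eq_left hm] at h3
    refine h3.congr' ?_
    filter_upwards [eventually_le_atBot m] with x hx
    rw [hform x, show max (m - x) 0 = m - x from max_eq_left (by linarith), ← max_add_add_right]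
    congr 1 <;> ring
  exact tendsto_nhds_unique h1 h2

lemma dsl_from_formula {S : Measure ℝ} {ε m : ℝ} (hε : 0 < ε) (hμ : MemM μ)
    (hm' : m ≤ meanM μ + ε)
    (hform : ∀ x, callFn S x = max (max (m - x) 0) (callFn μ x - ε)) :
    dSL μ S ≤ ENNReal.ofReal ε := by
  rw [dSL]
  refine iSup_le fun x => ?_
  refine ENNReal.ofReal_le_ofReal ?_
  rw [hform x, abs_le]
  constructor
  · have j := jensen_call hμ x
    have hb : max (m - x) 0 ≤ callFn μ x + ε := by
      refine max_le ?_ (by linarith [callFn_nonneg μ x])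
      calc m - x ≤ (meanM μ - x) + ε := by linarith
        _ ≤ max (meanM μ - x) 0 + ε := by linarith [le_max_left (meanM μ - x) (0:ℝ)]
        _ ≤ callFn μ x + ε := by linarith
    have hb2 : max (max (m - x) 0) (callFn μ x - ε) ≤ callFn μ x + ε :=
      max_le hb (by linarith)
    linarith
  · linarith [le_max_right (max (m - x) 0) (callFn μ x - ε)]

lemma minimal_from_formula {S : Measure ℝ} {ε m : ℝ} (hε : 0 < ε) (hμ : MemM μ) (hS : MemM S)
    (hmeanS : meanM S = m)
    (hform : ∀ x, callFn S x = max (max (m - x) 0) (callFn μ x - ε)) :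
    ∀ ν : Measure ℝ, MemM ν → dSL μ ν ≤ ENNReal.ofReal ε → meanM ν = m → ConvexOrder S ν := by
  intro ν hν hd hmean
  refine convexOrder_of_callFn_le hS hν (by rw [hmeanS, hmean]) fun x => ?_
  rw [hform x]
  refine max_le (max_le ?_ (callFn_nonneg ν x)) ?_
  · have j := jensen_call hν x
    rw [hmean] at j
    exact le_trans (le_max_left _ _) j
  · have hx : ENNReal.ofReal |callFn μ x - callFn ν x| ≤ ENNReal.ofReal ε := by
      refine le_trans ?_ hd
      rw [dSL]
      exact le_iSup (fun x => ENNReal.ofReal |callFn μ x - callFn ν x|) x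
    have h2 := (ENNReal.ofReal_le_ofReal_iff hε.le).mp hx
    have h3 := (abs_le.mp h2).2
    linarith

end Assemble

end BallSL

end BallSLAux

/-- existence and uniqueness of the least element `S(μ; m, ε)` of
`B^SL(μ,ε) ∩ M_m` in convex order, with call function
`max{(m−x)⁺, R_μ(x) − ε}`. -/
theorem ball_sl_least_element (ε : ℝ) (hε : 0 < ε) (μ : Measure ℝ) (hμ : MemM μ)
    (m : ℝ) (hm : m ∈ Set.Icc (meanM μ - ε) (meanM μ + ε)) :
    ∃! S : Measure ℝ,
      (MemM S ∧ dSL μ S ≤ ENNReal.ofReal ε ∧ meanM S = m) ∧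
      (∀ ν : Measure ℝ, MemM ν → dSL μ ν ≤ ENNReal.ofReal ε → meanM ν = m →
        ConvexOrder S ν) ∧
      (∀ x : ℝ, callFn S x = max (max (m - x) 0) (callFn μ x - ε)) := by
  obtain ⟨S, hS, hform⟩ := BallSL.exists_S hε hμ hm.1 hm.2
  have hmean := BallSL.mean_from_formula hμ hS hm.1 hform
  refine ⟨S, ⟨⟨hS, BallSL.dsl_from_formula hε hμ hm.2 hform, hmean⟩,
    BallSL.minimal_from_formula hε hμ hS hmean hform, hform⟩, ?_⟩
  rintro S' ⟨⟨hS', _, _⟩, _, hform'⟩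
  exact BallSL.measure_eq_of_callFn_eq hS' hS fun x => by rw [hform x, hform' x]
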